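/- arXiv:2004.14490 — 2 statements merged into one kernel-verified Lean document; each statement's English description precedes it below -/
import Mathlib

section
/- Let δ, k ∈ ℕ with δ − 1 = q a prime power and k ≥ 7. Then there exists a connected bipartite C₄-free graph of minimum degree δ and maximum degree Δ = (q^k − 1)(q^{k−1} − 1)/((q² − 1)(q² − q)) − 1/q, whose order n satisfies Δ* ≤ n ≤ Δ* + 2√(Δ(δ−2)) + 1/2, where Δ* = Δδ + (δ−1)·√(Δ(δ−2)) + 3/2. -/
open SimpleGraph

/-- The eccentricity of a vertex `v`: the maximum distance from `v` to a vertex of `G`. -/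
noncomputable def eccent {V : Type*} (G : SimpleGraph V) (v : V) : ℕ :=
  sSup (Set.range (G.dist v))

/-- The average eccentricity of a finite graph `G`. -/
noncomputable def avec {V : Type*} (G : SimpleGraph V) : ℝ :=
  (∑ᶠ v, (eccent G v : ℝ)) / (Nat.card V)

/-- `G` contains no cycle of length `m` as a (not necessarily induced) subgraph. -/
def CycleFree {V : Type*} (G : SimpleGraph V) (m : ℕ) : Prop :=
  ∀ ⦃v : V⦄ (w : G.Walk v v), w.IsCycle → w.length ≠ m



namespace C4FC

variable {F : Type} [Field F] {μ : ℕ}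

abbrev Pt (F : Type) (μ : ℕ) := Fin (μ+2) → F

abbrev Dir (F : Type) (μ : ℕ) := Σ i : Fin (μ+2), (Fin i.1 → F)

def dvec (d : Dir F μ) : Pt F μ := fun j =>
  if h : j.1 < d.1.1 then d.2 ⟨j.1, h⟩ else if j = d.1 then 1 else 0

lemma dvec_self (d : Dir F μ) : dvec d d.1 = 1 := by
  simp [dvec]

lemma dvec_of_gt (d : Dir F μ) {j : Fin (μ+2)} (h : d.1.1 < j.1) : dvec d j = 0 := by
  have h1 : ¬ j.1 < d.1.1 := by omega
  have h2 : j ≠ d.1 := by intro e; rw [e] at h; omega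
  simp [dvec, h1, h2]

lemma dvec_lt (d : Dir F μ) {j : Fin (μ+2)} (h : j.1 < d.1.1) :
    dvec d j = d.2 ⟨j.1, h⟩ := by simp [dvec, h]

lemma dvec_ne_zero (d : Dir F μ) : dvec d ≠ 0 := by
  intro h
  have := congrFun h d.1
  rw [dvec_self] at this
  simp at this

lemma dir_eq_of_smul {d d' : Dir F μ} {c : F} (h : dvec d = c • dvec d') : d = d' := by
  have hc1 : dvec d d'.1 = c := by rw [h]; simp [dvec_self]
  have hcd : dvec d' d.1 * c = 1 := by
    have := congrFun h d.1
    rw [dvec_self] at this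
    rw [mul_comm]; simpa using this.symm
  have hle1 : d.1.1 ≤ d'.1.1 := by
    by_contra hlt
    push_neg at hlt
    rw [dvec_of_gt d' hlt] at hcd
    simp at hcd
  have hle2 : d'.1.1 ≤ d.1.1 := by
    by_contra hlt
    push_neg at hlt
    rw [dvec_of_gt d hlt] at hc1
    rw [← hc1] at hcd
    simp at hcd
  have hii : d'.1 = d.1 := Fin.ext (le_antisymm hle2 hle1)
  have hc : c = 1 := by rw [← hc1, hii, dvec_self]
  subst hc
  rw [one_smul] at h
  obtain ⟨i, w⟩ := d
  obtain ⟨i', w'⟩ := d'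
  simp only at hii
  subst hii
  have hw : w = w' := by
    funext j
    have hj : (j.1 : ℕ) < μ + 2 := by have := j.2; omega
    have := congrFun h ⟨j.1, hj⟩
    rw [dvec_lt _ (by exact j.2), dvec_lt _ (by exact j.2)] at this
    simpa using this
  rw [hw]

end C4FC


namespace C4FC2
open C4FC

variable {F : Type} [Field F] {μ : ℕ}

/-- alternate coordinate, different from i -/
def alt (i : Fin (μ+2)) : Fin (μ+2) := if i = 0 then 1 else 0

lemma alt_ne (i : Fin (μ+2)) : alt i ≠ i := by
  unfold alt
  split
  · subst ‹i = 0›; simp [Fin.ext_iff]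
  · intro h; exact ‹i ≠ 0› h.symm

abbrev Ln (F : Type) [Field F] (μ : ℕ) := {dy : Dir F μ × Pt F μ // dy.2 dy.1.1 = 0}

abbrev Gp (F : Type) [Field F] (μ : ℕ) :=
  {dz : Dir F μ × Pt F μ // dz.2 dz.1.1 = 0 ∧ dz.2 (alt dz.1.1) = 0}

noncomputable instance : DecidableEq F := Classical.decEq F

/-- parent group of a line -/
def par (l : Ln F μ) : Gp F μ :=
  ⟨(l.1.1, Function.update l.1.2 (alt l.1.1.1) 0), by
    refine ⟨?_, ?_⟩
    · show Function.update l.1.2 (alt l.1.1.1) 0 l.1.1.1 = 0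
      rw [Function.update_of_ne (alt_ne _).symm]
      exact l.2
    · show Function.update l.1.2 (alt l.1.1.1) 0 (alt l.1.1.1) = 0
      simp⟩

/-- line from a group and a parameter -/
def unpar (g : Gp F μ) (c : F) : Ln F μ :=
  ⟨(g.1.1, Function.update g.1.2 (alt g.1.1.1) c), by
    show Function.update g.1.2 (alt g.1.1.1) c g.1.1.1 = 0
    rw [Function.update_of_ne (alt_ne _).symm]
    exact g.2.1⟩

lemma par_unpar (g : Gp F μ) (c : F) : par (unpar g c) = g := by
  obtain ⟨⟨d, z⟩, hz1, hz2⟩ := g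
  apply Subtype.ext
  simp only [par, unpar, Function.update_idem]
  rw [← hz2, Function.update_eq_self]

lemma unpar_par (l : Ln F μ) : unpar (par l) (l.1.2 (alt l.1.1.1)) = l := by
  obtain ⟨⟨d, y⟩, hy⟩ := l
  apply Subtype.ext
  simp only [par, unpar, Function.update_idem, Function.update_eq_self]

lemma par_fiber {l : Ln F μ} {g : Gp F μ} : par l = g ↔ ∃ c, l = unpar g c := by
  constructor
  · intro h; exact ⟨l.1.2 (alt l.1.1.1), by rw [← h, unpar_par]⟩
  · rintro ⟨c, rfl⟩; exact par_unpar g c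

lemma unpar_inj (g : Gp F μ) : Function.Injective (unpar g) := by
  intro c c' h
  have := congrArg (fun l : Ln F μ => l.1.2 (alt g.1.1.1)) h
  simpa [unpar] using this

lemma par_dir (l : Ln F μ) : (par l).1.1 = l.1.1 := rfl

/-- the point on line l with parameter c -/
def ptOn (l : Ln F μ) (c : F) : Pt F μ := l.1.2 + c • dvec l.1.1

/-- the line through x with direction d -/
def lineThru (x : Pt F μ) (d : Dir F μ) : Ln F μ :=
  ⟨(d, x - (x d.1) • dvec d), by
    show (x - (x d.1) • dvec d) d.1 = 0
    simp [dvec_self]⟩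

lemma lineThru_dir (x : Pt F μ) (d : Dir F μ) : (lineThru x d).1.1 = d := rfl

/-- membership predicate -/
def OnLn (l : Ln F μ) (x : Pt F μ) : Prop := lineThru x l.1.1 = l

lemma ptOn_coord (l : Ln F μ) (c : F) : ptOn l c l.1.1.1 = c := by
  have h0 : l.1.2 l.1.1.1 = 0 := l.2
  simp [ptOn, dvec_self, h0]

lemma onLn_ptOn (l : Ln F μ) (c : F) : OnLn l (ptOn l c) := by
  apply Subtype.ext
  show ((l.1.1 : Dir F μ), ptOn l c - (ptOn l c l.1.1.1) • dvec l.1.1) = l.1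
  rw [ptOn_coord]
  have : ptOn l c - c • dvec l.1.1 = l.1.2 := by
    simp [ptOn]
  rw [this]

lemma onLn_iff {l : Ln F μ} {x : Pt F μ} : OnLn l x ↔ ∃ c, x = ptOn l c := by
  constructor
  · intro h
    refine ⟨x l.1.1.1, ?_⟩
    have h2 : l.1.2 = x - (x l.1.1.1) • dvec l.1.1 := by
      conv_lhs => rw [← h]
      rfl
    unfold ptOn
    rw [h2]
    simp
  · rintro ⟨c, rfl⟩; exact onLn_ptOn l c

lemma ptOn_inj (l : Ln F μ) : Function.Injective (ptOn l) := by
  intro c c' h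
  have := congrArg (fun x : Pt F μ => x l.1.1.1) h
  simpa [ptOn_coord] using this

lemma lineThru_inj (x : Pt F μ) : Function.Injective (lineThru x) := by
  intro d d' h
  have := congrArg (fun l : Ln F μ => l.1.1) h
  simpa [lineThru] using this

/-- two lines with the same direction through a common point are equal -/
lemma line_eq_of_dir {l1 l2 : Ln F μ} {x : Pt F μ} (hd : l1.1.1 = l2.1.1)
    (h1 : OnLn l1 x) (h2 : OnLn l2 x) : l1 = l2 := by
  rw [← h1, ← h2, hd]

/-- two lines through two distinct common points are equal -/
lemma line_eq_of_two_points {l1 l2 : Ln F μ} {x x' : Pt F μ} (hxx : x ≠ x')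
    (h1 : OnLn l1 x) (h1' : OnLn l1 x') (h2 : OnLn l2 x) (h2' : OnLn l2 x') :
    l1 = l2 := by
  obtain ⟨c1, e1⟩ := onLn_iff.1 h1
  obtain ⟨c1', e1'⟩ := onLn_iff.1 h1'
  obtain ⟨c2, e2⟩ := onLn_iff.1 h2
  obtain ⟨c2', e2'⟩ := onLn_iff.1 h2'
  have hv1 : x - x' = (c1 - c1') • dvec l1.1.1 := by
    rw [e1, e1']; simp [ptOn, sub_smul]
  have hv2 : x - x' = (c2 - c2') • dvec l2.1.1 := by
    rw [e2, e2']; simp [ptOn, sub_smul]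
  have hc : c1 - c1' ≠ 0 := by
    intro h0
    rw [h0, zero_smul, sub_eq_zero] at hv1
    exact hxx hv1
  have hv : dvec l1.1.1 = ((c1 - c1')⁻¹ * (c2 - c2')) • dvec l2.1.1 := by
    rw [← smul_smul, ← hv2, hv1, smul_smul, inv_mul_cancel₀ hc, one_smul]
  exact line_eq_of_dir (dir_eq_of_smul hv) h1 h2

end C4FC2

namespace C4FC3
open C4FC C4FC2

variable (F : Type) [Field F] [Fintype F] (μ : ℕ)


lemma card_pt : Nat.card (Pt F μ) = (Nat.card F) ^ (μ + 2) := by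
  simp [Nat.card_eq_fintype_card, Fintype.card_fun]

lemma card_dir : Nat.card (Dir F μ) = ∑ i ∈ Finset.range (μ+2), (Nat.card F) ^ i := by
  rw [Nat.card_eq_fintype_card]
  rw [Fintype.card_sigma]
  rw [← Fin.sum_univ_eq_sum_range (fun i => (Nat.card F) ^ i) (μ+2)]
  congr 1
  funext i
  simp [Nat.card_eq_fintype_card, Fintype.card_fun]

/-- restriction equivalence for the two-zeros subtype -/
noncomputable def zeros2Equiv {n : ℕ} (a b : Fin n) (hab : a ≠ b) :
    {z : Fin n → F // z a = 0 ∧ z b = 0} ≃ ({j : Fin n // j ≠ a ∧ j ≠ b} → F) where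
  toFun z j := z.1 j.1
  invFun g := ⟨fun j => if h : j = a ∨ j = b then 0 else g ⟨j, by tauto⟩,
    by simp, by simp⟩
  left_inv z := by
    apply Subtype.ext
    funext j
    by_cases hja : j = a
    · subst hja; simpa using z.2.1.symm
    · by_cases hjb : j = b
      · subst hjb; simpa using z.2.2.symm
      · simp [hja, hjb]
  right_inv g := by
    funext j
    have : ¬ (j.1 = a ∨ j.1 = b) := by
      rintro (h | h)
      exacts [j.2.1 h, j.2.2 h]
    simp only [this, dite_false]

lemma card_compl2 {n : ℕ} (a b : Fin n) (hab : a ≠ b) :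
    Nat.card {j : Fin n // j ≠ a ∧ j ≠ b} = n - 2 := by
  rw [Nat.card_eq_fintype_card, Fintype.card_subtype]
  have : (Finset.univ.filter fun j : Fin n => j ≠ a ∧ j ≠ b) = Finset.univ \ {a, b} := by
    ext j; simp [and_comm]
  rw [this, Finset.card_sdiff_of_subset (by simp)]
  simp [Finset.card_insert_of_notMem, hab]

lemma card_zeros2 {n : ℕ} (a b : Fin n) (hab : a ≠ b) :
    Nat.card {z : Fin n → F // z a = 0 ∧ z b = 0} = (Nat.card F) ^ (n - 2) := by
  rw [Nat.card_congr (zeros2Equiv F a b hab)]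
  rw [Nat.card_fun]
  rw [card_compl2 _ _ hab]

lemma card_gp : Nat.card (Gp F μ) =
    (∑ i ∈ Finset.range (μ+2), (Nat.card F) ^ i) * (Nat.card F) ^ μ := by
  have e : Gp F μ ≃ Σ d : Dir F μ, {z : Pt F μ // z d.1 = 0 ∧ z (alt d.1) = 0} :=
    Equiv.subtypeProdEquivSigmaSubtype (fun (d : Dir F μ) (z : Pt F μ) => z d.1 = 0 ∧ z (alt d.1) = 0)
  rw [Nat.card_congr e]
  rw [Nat.card_eq_fintype_card, Fintype.card_sigma]
  have hd : ∀ d : Dir F μ, Fintype.card {z : Pt F μ // z d.1 = 0 ∧ z (alt d.1) = 0}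
      = (Nat.card F) ^ μ := by
    intro d
    rw [← Nat.card_eq_fintype_card]
    simpa using card_zeros2 F d.1 (alt d.1) (alt_ne d.1).symm
  calc (∑ d : Dir F μ, Fintype.card {z : Pt F μ // z d.1 = 0 ∧ z (alt d.1) = 0})
      = ∑ _d : Dir F μ, (Nat.card F) ^ μ := by
        exact Finset.sum_congr rfl (fun d _ => hd d)
    _ = (Fintype.card (Dir F μ)) * (Nat.card F) ^ μ := by
        rw [Finset.sum_const, smul_eq_mul, Finset.card_univ]
    _ = _ := by rw [← Nat.card_eq_fintype_card, card_dir]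

/-- a line is determined by its parent group and one parameter -/
noncomputable def lnEquiv : Ln F μ ≃ Gp F μ × F where
  toFun l := (par l, l.1.2 (alt l.1.1.1))
  invFun gc := unpar gc.1 gc.2
  left_inv l := unpar_par l
  right_inv gc := by
    obtain ⟨g, c⟩ := gc
    refine Prod.ext (par_unpar g c) ?_
    show (unpar g c).1.2 (alt (unpar g c).1.1.1) = c
    simp [unpar]

lemma card_ln : Nat.card (Ln F μ) = Nat.card (Gp F μ) * Nat.card F := by
  rw [Nat.card_congr (lnEquiv F μ), Nat.card_prod]

end C4FC3

namespace C4FC4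
open C4FC C4FC2 C4FC3

variable (F : Type) [Field F] [Fintype F] (k : ℕ)

abbrev UT := Σ μ : Fin (k-2), Gp F μ.1
abbrev LT := Σ μ : Fin (k-2), Ln F μ.1
abbrev PT := Σ μ : Fin (k-2), Pt F μ.1
abbrev VT := Unit ⊕ (UT F k) ⊕ (LT F k) ⊕ (PT F k)

variable {F k}

def ParS : LT F k → UT F k := fun l => ⟨l.1, par l.2⟩

def OnS (l : LT F k) (p : PT F k) : Prop := ∃ d : Dir F p.1.1, l = ⟨p.1, lineThru p.2 d⟩

lemma parS_fiber {l : LT F k} {u : UT F k} :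
    ParS l = u ↔ ∃ c : F, l = ⟨u.1, unpar u.2 c⟩ := by
  constructor
  · intro h
    subst h
    refine ⟨l.2.1.2 (alt l.2.1.1.1), ?_⟩
    show l = ⟨l.1, unpar (par l.2) (l.2.1.2 (alt l.2.1.1.1))⟩
    rw [unpar_par, Sigma.eta]
  · rintro ⟨c, rfl⟩
    show (⟨u.1, par (unpar u.2 c)⟩ : UT F k) = u
    rw [par_unpar, Sigma.eta]

lemma onS_iff {l : LT F k} {p : PT F k} :
    OnS l p ↔ ∃ c : F, p = ⟨l.1, ptOn l.2 c⟩ := by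
  constructor
  · rintro ⟨d, rfl⟩
    have hon : OnLn (lineThru p.2 d) p.2 := rfl
    obtain ⟨c, hc⟩ := onLn_iff.mp hon
    refine ⟨c, ?_⟩
    show p = ⟨p.1, ptOn (lineThru p.2 d) c⟩
    rw [← hc, Sigma.eta]
  · rintro ⟨c, rfl⟩
    refine ⟨l.2.1.1, ?_⟩
    show l = ⟨l.1, lineThru (ptOn l.2 c) l.2.1.1⟩
    rw [show lineThru (ptOn l.2 c) l.2.1.1 = l.2 from onLn_ptOn l.2 c, Sigma.eta]

lemma sib_lemma {l1 l2 : LT F k} {p : PT F k} (hpar : ParS l1 = ParS l2)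
    (h1 : OnS l1 p) (h2 : OnS l2 p) : l1 = l2 := by
  obtain ⟨d1, rfl⟩ := h1
  obtain ⟨d2, rfl⟩ := h2
  dsimp only [ParS] at hpar
  have h2' : par (lineThru p.2 d1) = par (lineThru p.2 d2) := eq_of_heq (Sigma.ext_iff.mp hpar).2
  have hd : d1 = d2 := congrArg (fun g : Gp F p.1.1 => g.1.1) h2'
  rw [hd]

lemma twopt_lemma {l1 l2 : LT F k} {p p' : PT F k} (hne : p ≠ p')
    (h1 : OnS l1 p) (h1' : OnS l1 p') (h2 : OnS l2 p) (h2' : OnS l2 p') : l1 = l2 := by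
  obtain ⟨d1, rfl⟩ := h1
  obtain ⟨d2, rfl⟩ := h2
  obtain ⟨c1, e1⟩ := onS_iff.mp h1'
  obtain ⟨c2, e2⟩ := onS_iff.mp h2'
  rw [e1] at e2 hne
  have ex : ptOn (lineThru p.2 d1) c1 = ptOn (lineThru p.2 d2) c2 := eq_of_heq (Sigma.ext_iff.mp e2).2
  have honA' : OnLn (lineThru p.2 d1) (ptOn (lineThru p.2 d1) c1) := onLn_ptOn _ _
  have honB' : OnLn (lineThru p.2 d2) (ptOn (lineThru p.2 d1) c1) := by
    rw [ex]; exact onLn_ptOn _ _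
  have honA : OnLn (lineThru p.2 d1) p.2 := rfl
  have honB : OnLn (lineThru p.2 d2) p.2 := rfl
  have hxx : p.2 ≠ ptOn (lineThru p.2 d1) c1 := by
    intro hx
    apply hne
    rw [← hx, Sigma.eta]
  have hAB : lineThru p.2 d1 = lineThru p.2 d2 :=
    line_eq_of_two_points hxx honA honA' honB honB'
  rw [hAB]

def S : VT F k → VT F k → Prop
  | .inl _, .inr (.inl _) => True
  | .inr (.inl u), .inr (.inr (.inl l)) => ParS l = u
  | .inr (.inr (.inl l)), .inr (.inr (.inr p)) => OnS l p
  | _, _ => False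

def G (F : Type) [Field F] [Fintype F] (k : ℕ) : SimpleGraph (VT F k) where
  Adj x y := S x y ∨ S y x
  symm := ⟨fun x y h => h.symm⟩
  loopless := by
    refine ⟨?_⟩
    intro x h
    rcases x with _ | u | l | p <;> simp [S] at h

end C4FC4

section Nbhd
open C4FC C4FC2 C4FC3 C4FC4

variable {F : Type} [Field F] [Fintype F] {k : ℕ}

abbrev vHub : VT F k := Sum.inl ()
abbrev vU (u : UT F k) : VT F k := Sum.inr (Sum.inl u)
abbrev vL (l : LT F k) : VT F k := Sum.inr (Sum.inr (Sum.inl l))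
abbrev vP (p : PT F k) : VT F k := Sum.inr (Sum.inr (Sum.inr p))

lemma adj_iff {x y : VT F k} : (G F k).Adj x y ↔ S x y ∨ S y x := Iff.rfl

lemma vU_inj : Function.Injective (vU (F := F) (k := k)) := by
  intro a b h
  exact Sum.inl_injective (Sum.inr_injective h)

lemma vL_inj : Function.Injective (vL (F := F) (k := k)) := by
  intro a b h
  exact Sum.inl_injective (Sum.inr_injective (Sum.inr_injective h))

lemma vP_inj : Function.Injective (vP (F := F) (k := k)) := by
  intro a b h
  exact Sum.inr_injective (Sum.inr_injective (Sum.inr_injective h))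

lemma false_or_false : (False ∨ False) ↔ False := by simp

lemma nb_hub : (G F k).neighborSet vHub = Set.range (vU (F := F) (k := k)) := by
  ext y
  simp only [SimpleGraph.mem_neighborSet, Set.mem_range]
  rcases y with _ | u | l | p
  · rw [show (G F k).Adj vHub vHub ↔ (False ∨ False) from Iff.rfl, false_or_false]
    exact iff_of_false id (fun ⟨u, hu⟩ => nomatch hu)
  · rw [show (G F k).Adj vHub (vU u) ↔ (True ∨ False) from Iff.rfl]
    exact iff_of_true (Or.inl trivial) ⟨u, rfl⟩
  · rw [show (G F k).Adj vHub (vL l) ↔ (False ∨ False) from Iff.rfl, false_or_false]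
    exact iff_of_false id (fun ⟨u, hu⟩ => nomatch (Sum.inr_injective hu))
  · rw [show (G F k).Adj vHub (vP p) ↔ (False ∨ False) from Iff.rfl, false_or_false]
    exact iff_of_false id (fun ⟨u, hu⟩ => nomatch (Sum.inr_injective hu))

lemma nb_u (u : UT F k) : (G F k).neighborSet (vU u) =
    insert vHub (Set.range fun c : F => vL (⟨u.1, unpar u.2 c⟩ : LT F k)) := by
  ext y
  simp only [SimpleGraph.mem_neighborSet, Set.mem_insert_iff, Set.mem_range]
  rcases y with _ | u' | l | p
  · rw [show (G F k).Adj (vU u) vHub ↔ (False ∨ True) from Iff.rfl]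
    exact iff_of_true (Or.inr trivial) (Or.inl rfl)
  · rw [show (G F k).Adj (vU u) (vU u') ↔ (False ∨ False) from Iff.rfl, false_or_false]
    refine iff_of_false id ?_
    rintro (h | ⟨c, hc⟩)
    · exact nomatch h
    · exact nomatch (Sum.inr_injective hc)
  · rw [show (G F k).Adj (vU u) (vL l) ↔ (ParS l = u ∨ False) from Iff.rfl, or_false,
      parS_fiber]
    constructor
    · rintro ⟨c, hc⟩
      exact Or.inr ⟨c, congrArg vL hc.symm⟩
    · rintro (h | ⟨c, hc⟩)
      · exact absurd h (fun hh => nomatch hh)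
      · exact ⟨c, (vL_inj hc).symm⟩
  · rw [show (G F k).Adj (vU u) (vP p) ↔ (False ∨ False) from Iff.rfl, false_or_false]
    refine iff_of_false id ?_
    rintro (h | ⟨c, hc⟩)
    · exact nomatch h
    · exact nomatch (Sum.inr_injective (Sum.inr_injective hc))

lemma nb_l (l : LT F k) : (G F k).neighborSet (vL l) =
    insert (vU (ParS l)) (Set.range fun c : F => vP (⟨l.1, ptOn l.2 c⟩ : PT F k)) := by
  ext y
  simp only [SimpleGraph.mem_neighborSet, Set.mem_insert_iff, Set.mem_range]
  rcases y with _ | u | l' | p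
  · rw [show (G F k).Adj (vL l) vHub ↔ (False ∨ False) from Iff.rfl, false_or_false]
    refine iff_of_false id ?_
    rintro (h | ⟨c, hc⟩)
    · exact nomatch h
    · exact nomatch hc
  · rw [show (G F k).Adj (vL l) (vU u) ↔ (False ∨ ParS l = u) from Iff.rfl, false_or]
    constructor
    · intro h
      exact Or.inl (congrArg vU h.symm)
    · rintro (h | ⟨c, hc⟩)
      · exact (vU_inj h).symm
      · exact absurd hc (fun hh => nomatch (Sum.inr_injective hh))
  · rw [show (G F k).Adj (vL l) (vL l') ↔ (False ∨ False) from Iff.rfl, false_or_false]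
    refine iff_of_false id ?_
    rintro (h | ⟨c, hc⟩)
    · exact nomatch (Sum.inr_injective h)
    · exact nomatch (Sum.inr_injective (Sum.inr_injective hc))
  · rw [show (G F k).Adj (vL l) (vP p) ↔ (OnS l p ∨ False) from Iff.rfl, or_false,
      onS_iff]
    constructor
    · rintro ⟨c, hc⟩
      exact Or.inr ⟨c, congrArg vP hc.symm⟩
    · rintro (h | ⟨c, hc⟩)
      · exact absurd h (fun hh => nomatch (Sum.inr_injective hh))
      · exact ⟨c, (vP_inj hc).symm⟩

lemma nb_p (p : PT F k) : (G F k).neighborSet (vP p) =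
    Set.range (fun d : Dir F p.1.1 => vL (⟨p.1, lineThru p.2 d⟩ : LT F k)) := by
  ext y
  simp only [SimpleGraph.mem_neighborSet, Set.mem_range]
  rcases y with _ | u | l | p'
  · rw [show (G F k).Adj (vP p) vHub ↔ (False ∨ False) from Iff.rfl, false_or_false]
    exact iff_of_false id (fun ⟨d, hd⟩ => nomatch hd)
  · rw [show (G F k).Adj (vP p) (vU u) ↔ (False ∨ False) from Iff.rfl, false_or_false]
    exact iff_of_false id (fun ⟨d, hd⟩ => nomatch (Sum.inr_injective hd))
  · rw [show (G F k).Adj (vP p) (vL l) ↔ (False ∨ OnS l p) from Iff.rfl, false_or]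
    constructor
    · rintro ⟨d, hd⟩
      exact ⟨d, congrArg vL hd.symm⟩
    · rintro ⟨d, hd⟩
      exact ⟨d, (vL_inj hd).symm⟩
  · rw [show (G F k).Adj (vP p) (vP p') ↔ (False ∨ False) from Iff.rfl, false_or_false]
    refine iff_of_false id ?_
    rintro ⟨d, hd⟩
    exact nomatch (Sum.inr_injective (Sum.inr_injective hd))

end Nbhd

section Deg
open C4FC C4FC2 C4FC3 C4FC4

variable {F : Type} [Field F] [Fintype F] {k : ℕ}

lemma ncard_range {α β : Type} [Finite α] {f : α → β} (hf : Function.Injective f) :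
    (Set.range f).ncard = Nat.card α := by
  rw [← Set.image_univ, Set.ncard_image_of_injective _ hf, Set.ncard_univ]

lemma deg_hub : ((G F k).neighborSet vHub).ncard = Nat.card (UT F k) := by
  rw [nb_hub, ncard_range vU_inj]

lemma deg_u (u : UT F k) : ((G F k).neighborSet (vU u)).ncard = Nat.card F + 1 := by
  rw [nb_u]
  have hinj : Function.Injective (fun c : F => vL (⟨u.1, unpar u.2 c⟩ : LT F k)) := by
    intro c c' h
    have h2 := vL_inj h
    exact unpar_inj u.2 (eq_of_heq (Sigma.ext_iff.mp h2).2)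
  have hnm : (vHub : VT F k) ∉ Set.range (fun c : F => vL (⟨u.1, unpar u.2 c⟩ : LT F k)) := by
    rintro ⟨c, hc⟩
    exact nomatch hc
  rw [Set.ncard_insert_of_notMem hnm, ncard_range hinj]

lemma deg_l (l : LT F k) : ((G F k).neighborSet (vL l)).ncard = Nat.card F + 1 := by
  rw [nb_l]
  have hinj : Function.Injective (fun c : F => vP (⟨l.1, ptOn l.2 c⟩ : PT F k)) := by
    intro c c' h
    have h2 := vP_inj h
    exact ptOn_inj l.2 (eq_of_heq (Sigma.ext_iff.mp h2).2)
  have hnm : vU (ParS l) ∉ Set.range (fun c : F => vP (⟨l.1, ptOn l.2 c⟩ : PT F k)) := by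
    rintro ⟨c, hc⟩
    exact nomatch (Sum.inr_injective hc)
  rw [Set.ncard_insert_of_notMem hnm, ncard_range hinj]

lemma deg_p (p : PT F k) :
    ((G F k).neighborSet (vP p)).ncard = Nat.card (Dir F p.1.1) := by
  rw [nb_p]
  have hinj : Function.Injective (fun d : Dir F p.1.1 => vL (⟨p.1, lineThru p.2 d⟩ : LT F k)) := by
    intro d d' h
    have h2 := vL_inj h
    have h3 : lineThru p.2 d = lineThru p.2 d' := eq_of_heq (Sigma.ext_iff.mp h2).2
    exact congrArg (fun l : Ln F p.1.1 => l.1.1) h3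
  rw [ncard_range hinj]

/-- canonical direction at any level -/
def d0 (μ : ℕ) : Dir F μ := ⟨⟨0, by omega⟩, fun _ => 0⟩

lemma reach_hub (x : VT F k) : (G F k).Reachable x vHub := by
  rcases x with _ | u | l | p
  · exact SimpleGraph.Reachable.refl _
  · exact SimpleGraph.Adj.reachable (Or.inr trivial)
  · refine SimpleGraph.Reachable.trans ?_
      (SimpleGraph.Adj.reachable (Or.inr trivial) :
        (G F k).Reachable (vU (ParS l)) vHub)
    exact SimpleGraph.Adj.reachable (Or.inr (rfl : ParS l = ParS l))
  · have s1 : (G F k).Reachable (vP p) (vL (⟨p.1, lineThru p.2 (d0 p.1.1)⟩ : LT F k)) :=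
      SimpleGraph.Adj.reachable (Or.inr ⟨d0 p.1.1, rfl⟩)
    have s2 : (G F k).Reachable (vL (⟨p.1, lineThru p.2 (d0 p.1.1)⟩ : LT F k))
        (vU (ParS (⟨p.1, lineThru p.2 (d0 p.1.1)⟩ : LT F k))) :=
      SimpleGraph.Adj.reachable (Or.inr rfl)
    have s3 : (G F k).Reachable (vU (ParS (⟨p.1, lineThru p.2 (d0 p.1.1)⟩ : LT F k))) vHub :=
      SimpleGraph.Adj.reachable (Or.inr trivial)
    exact (s1.trans s2).trans s3

lemma conn : (G F k).Connected := by
  rw [SimpleGraph.connected_iff]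
  refine ⟨fun x y => (reach_hub x).trans (reach_hub y).symm, ⟨vHub⟩⟩

/-- 2-coloring -/
def col : VT F k → Fin 2 := Sum.elim (fun _ => 0) (Sum.elim (fun _ => 1) (Sum.elim (fun _ => 0) (fun _ => 1)))

lemma colorable2 : (G F k).Colorable 2 := by
  have key : ∀ x y : VT F k, S x y → col x ≠ col y := by
    intro x y h
    rcases x with _ | u | l | p <;> rcases y with _ | u' | l' | p' <;>
      first
        | exact False.elim h
        | simp [col]
  have C : (G F k).Coloring (Fin 2) :=
    SimpleGraph.Coloring.mk col (by
      intro v w hadj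
      rcases hadj with h | h
      · exact key _ _ h
      · exact (key _ _ h).symm)
  simpa using C.colorable

lemma nocommon {a b c d : VT F k} (h1 : (G F k).Adj a b) (h2 : (G F k).Adj b c)
    (h3 : (G F k).Adj c d) (h4 : (G F k).Adj d a)
    (hac : a ≠ c) (hbd : b ≠ d) : False := by
  rcases a with _ | ua | la | pa <;>
  rcases b with _ | ub | lb | pb <;>
  rcases h1 with h1 | h1 <;>
  (try exact False.elim h1) <;>
  rcases c with _ | uc | lc | pc <;>
  rcases h2 with h2 | h2 <;>
  (try exact False.elim h2) <;>
  (try exact hac rfl) <;>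
  rcases d with _ | ud | ld | pd <;>
  rcases h3 with h3 | h3 <;>
  (try exact False.elim h3) <;>
  rcases h4 with h4 | h4 <;>
  (try exact False.elim h4) <;>
  (try exact hbd rfl) <;>
  first
    | exact hbd (congrArg vU (h2.symm.trans h3))
    | exact hac (congrArg vU (h4.symm.trans h3))
    | exact hac (congrArg vU (h1.symm.trans h2))
    | exact hbd (congrArg vU (h1.symm.trans h4))
    | exact hbd (congrArg vL (sib_lemma (h1.trans h4.symm) h2 h3))
    | exact hbd (congrArg vL (sib_lemma (h2.trans h3.symm) h1 h4))
    | exact hac (congrArg vL (sib_lemma (h1.trans h2.symm) h4 h3))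
    | exact hac (congrArg vL (sib_lemma (h4.trans h3.symm) h1 h2))
    | exact hac (congrArg vL (twopt_lemma (fun he => hbd (congrArg vP he)) h1 h4 h2 h3))
    | exact hbd (congrArg vL (twopt_lemma (fun he => hac (congrArg vP he)) h1 h2 h4 h3))

end Deg

section Card
open C4FC C4FC2 C4FC3 C4FC4

variable (F : Type) [Field F] [Fintype F] (k : ℕ)

lemma card_UT : Nat.card (UT F k) =
    ∑ μ ∈ Finset.range (k-2), (∑ i ∈ Finset.range (μ+2), (Nat.card F)^i) * (Nat.card F)^μ := by
  rw [Nat.card_eq_fintype_card, Fintype.card_sigma]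
  rw [← Fin.sum_univ_eq_sum_range
    (fun μ => (∑ i ∈ Finset.range (μ+2), (Nat.card F)^i) * (Nat.card F)^μ) (k-2)]
  congr 1
  funext μ
  rw [← Nat.card_eq_fintype_card, card_gp]

lemma card_LT : Nat.card (LT F k) = Nat.card (UT F k) * Nat.card F := by
  have e : LT F k ≃ UT F k × F :=
    (Equiv.sigmaCongrRight (fun μ' : Fin (k-2) => lnEquiv F μ'.1)).trans
      (Equiv.sigmaProdDistrib _ _).symm
  rw [Nat.card_congr e, Nat.card_prod]

lemma card_PT : Nat.card (PT F k) =
    ∑ μ ∈ Finset.range (k-2), (Nat.card F)^(μ+2) := by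
  rw [Nat.card_eq_fintype_card, Fintype.card_sigma]
  rw [← Fin.sum_univ_eq_sum_range (fun μ => (Nat.card F)^(μ+2)) (k-2)]
  congr 1
  funext μ
  rw [← Nat.card_eq_fintype_card, card_pt]

lemma card_VT : Nat.card (VT F k) =
    1 + Nat.card (UT F k) + Nat.card (LT F k) + Nat.card (PT F k) := by
  rw [show (VT F k) = (Unit ⊕ (UT F k) ⊕ (LT F k) ⊕ (PT F k)) from rfl]
  rw [Nat.card_sum, Nat.card_sum, Nat.card_sum]; simp only [Nat.card_eq_fintype_card, Fintype.card_unit]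
  ring

end Card

section Numeric
open Finset

def Deln (q k : ℕ) : ℕ := ∑ μ ∈ Finset.range (k-2), (∑ i ∈ Finset.range (μ+2), q^i) * q^μ
def Sn (q k : ℕ) : ℕ := ∑ μ ∈ Finset.range (k-2), q^(μ+2)

variable {q k : ℕ}

lemma sum2 (hq : 1 ≤ q) : (∑ i ∈ Finset.range 2, q^i) = 1 + q := by
  simp [Finset.sum_range_succ]

lemma N2 (hq : 1 ≤ q) (hk : 3 ≤ k) : q + 1 ≤ Deln q k := by
  have h0 : (0:ℕ) ∈ Finset.range (k-2) := by
    simp; omega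
  have := Finset.single_le_sum
    (f := fun μ => (∑ i ∈ Finset.range (μ+2), q^i) * q^μ) (fun i _ => Nat.zero_le _) h0
  calc q + 1 = (∑ i ∈ Finset.range 2, q^i) * q^0 := by rw [sum2 hq]; ring
    _ ≤ Deln q k := this

lemma N4 (hq : 1 ≤ q) (μ : ℕ) : q + 1 ≤ ∑ i ∈ Finset.range (μ+2), q^i := by
  calc q + 1 = ∑ i ∈ Finset.range 2, q^i := by rw [sum2 hq]; ring
    _ ≤ _ := Finset.sum_le_sum_of_subset (Finset.range_subset_range.mpr (by omega))

lemma N3 (hq : 1 ≤ q) (hμ : μ < k-2) : (∑ i ∈ Finset.range (μ+2), q^i) ≤ Deln q k := by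
  have h0 : μ ∈ Finset.range (k-2) := by simp [hμ]
  have h1 := Finset.single_le_sum
    (f := fun μ => (∑ i ∈ Finset.range (μ+2), q^i) * q^μ) (fun i _ => Nat.zero_le _) h0
  have h2 : (∑ i ∈ Finset.range (μ+2), q^i) ≤ (∑ i ∈ Finset.range (μ+2), q^i) * q^μ :=
    Nat.le_mul_of_pos_right _ (Nat.pow_pos hq)
  exact h2.trans h1

end Numeric

section RealBounds
open Finset

variable {q k : ℕ}

lemma Deln_real (hq : 2 ≤ q) :
    (Deln q k : ℝ) = ((q:ℝ)^2*(((q:ℝ)^(k-2))^2 - 1)/((q:ℝ)^2-1)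
      - ((q:ℝ)^(k-2) - 1)/((q:ℝ)-1))/((q:ℝ)-1) := by
  have hQ2 : (2:ℝ) ≤ (q:ℝ) := by exact_mod_cast hq
  have hq1 : (q:ℝ) ≠ 1 := by nlinarith
  have hq21 : (q:ℝ)^2 ≠ 1 := by nlinarith
  unfold Deln
  push_cast
  have hterm : ∀ μ ∈ Finset.range (k-2), (∑ i ∈ Finset.range (μ+2), (q:ℝ)^i) * (q:ℝ)^μ
      = ((q:ℝ)^2*((q:ℝ)^2)^μ - (q:ℝ)^μ)/((q:ℝ)-1) := by
    intro μ _
    rw [geom_sum_eq hq1, div_mul_eq_mul_div]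
    congr 1
    ring
  rw [Finset.sum_congr rfl hterm, ← Finset.sum_div, Finset.sum_sub_distrib,
    ← Finset.mul_sum, geom_sum_eq hq1, geom_sum_eq hq21,
    show ((q:ℝ)^2)^(k-2) = ((q:ℝ)^(k-2))^2 by rw [← pow_mul, ← pow_mul, Nat.mul_comm]]
  ring

lemma Sn_real (hq : 2 ≤ q) :
    (Sn q k : ℝ) = (q:ℝ)^2*((q:ℝ)^(k-2) - 1)/((q:ℝ)-1) := by
  have hQ2 : (2:ℝ) ≤ (q:ℝ) := by exact_mod_cast hq
  have hq1 : (q:ℝ) ≠ 1 := by nlinarith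
  unfold Sn
  push_cast
  have hterm : ∀ μ ∈ Finset.range (k-2), (q:ℝ)^(μ+2) = (q:ℝ)^2*(q:ℝ)^μ :=
    fun μ _ => by ring
  rw [Finset.sum_congr rfl hterm, ← Finset.mul_sum, geom_sum_eq hq1, mul_div_assoc]

lemma N1 (hq : 2 ≤ q) (hk : 7 ≤ k) :
    (Deln q k : ℝ) = ((q:ℝ)^k - 1)*((q:ℝ)^(k-1) - 1)/(((q:ℝ)^2 - 1)*((q:ℝ)^2 - (q:ℝ)))
      - 1/(q:ℝ) := by
  have hQ2 : (2:ℝ) ≤ (q:ℝ) := by exact_mod_cast hq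
  have hq0 : (q:ℝ) ≠ 0 := by nlinarith
  have hqm : (q:ℝ) - 1 ≠ 0 := by nlinarith
  have hq2m : (q:ℝ)^2 - 1 ≠ 0 := by nlinarith
  have hq2q : (q:ℝ)^2 - (q:ℝ) ≠ 0 := by nlinarith
  have e1 : (q:ℝ)^k = (q:ℝ)^(k-2) * (q:ℝ)^2 := by
    rw [← pow_add]; congr 1; omega
  have e2 : (q:ℝ)^(k-1) = (q:ℝ)^(k-2) * (q:ℝ) := by
    rw [← pow_succ]; congr 1; omega
  rw [Deln_real hq, e1, e2]
  field_simp
  ring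

lemma Sn_ge (hq : 2 ≤ q) (hk : 7 ≤ k) : q^2 ≤ Sn q k := by
  have h0 : (0:ℕ) ∈ Finset.range (k-2) := by simp; omega
  have := Finset.single_le_sum (f := fun μ : ℕ => q^(μ+2)) (fun i _ => Nat.zero_le _) h0
  exact this

lemma aux_Q5 {Q : ℝ} (hQ : 2 ≤ Q) : Q ≤ Q^5 := by
  have hQ0 : (0:ℝ) ≤ Q := by nlinarith
  have h4 : (1:ℝ) ≤ Q^2 := by nlinarith
  nlinarith [mul_nonneg (mul_nonneg hQ0 (sub_nonneg.2 h4)) (by nlinarith : (0:ℝ) ≤ Q^2+1)]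

lemma polyL (Q a : ℝ) (hQ : 2 ≤ Q) (ha : Q^5 - 1 ≤ a) :
    Q^2*(Q-1)*(a*(Q^2*(a+2) - (Q+1))) ≤ (Q+1)*(Q^2*a - (Q-1)/2)^2 := by
  have haQ : Q - 1 ≤ a := by nlinarith [aux_Q5 hQ]
  have hQ2 : (0:ℝ) ≤ Q^2 := sq_nonneg Q
  have hintL1 : (0:ℝ) ≤ (Q^2*a - Q^2*(Q-1))*(Q^2*a) := by
    have h1 : Q^2*(Q-1) ≤ Q^2*a := by nlinarith
    have h2 : (0:ℝ) ≤ Q^2*a := by nlinarith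
    nlinarith
  have hintL2 : (0:ℝ) ≤ (Q+1)*(Q-1)^2 := by
    have := sq_nonneg (Q-1)
    nlinarith
  nlinarith [hintL1, hintL2]

lemma polyU (Q a : ℝ) (hQ : 2 ≤ Q) (ha : Q^5 - 1 ≤ a) :
    (Q+1)*(Q^2*a - (Q-1))^2 ≤ (Q+2)^2*(Q-1)*(a*(Q^2*(a+2) - (Q+1))) := by
  have haQ : Q - 1 ≤ a := by nlinarith [aux_Q5 hQ]
  have hQ2 : (0:ℝ) < Q^2 := by nlinarith
  have hC : (0:ℝ) ≤ (Q+2)^2*(Q-1)*(2*Q^2-Q-1) + 2*(Q+1)*(Q-1)*Q^2 := by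
    have hA : (0:ℝ) ≤ (Q+2)^2*(Q-1)*(2*Q^2-Q-1) :=
      mul_nonneg (mul_nonneg (sq_nonneg _) (by nlinarith)) (by nlinarith)
    have hB : (0:ℝ) ≤ 2*(Q+1)*(Q-1)*Q^2 :=
      mul_nonneg (mul_nonneg (mul_nonneg (by norm_num) (by nlinarith)) (by nlinarith)) (sq_nonneg Q)
    linarith
  have hintA : (0:ℝ) ≤ (2*Q^2 - 4) * (Q^2*a)^2 := by
    have h1 : (0:ℝ) ≤ 2*Q^2 - 4 := by nlinarith
    nlinarith [sq_nonneg (Q^2*a)]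
  have hintB : (0:ℝ) ≤ (Q^2*a - Q^2*(Q-1)) *
      ((Q+2)^2*(Q-1)*(2*Q^2-Q-1) + 2*(Q+1)*(Q-1)*Q^2) := by
    have h1 : Q^2*(Q-1) ≤ Q^2*a := by nlinarith
    exact mul_nonneg (by nlinarith) hC
  have hQonly : Q^2*(Q+1)*(Q-1)^2 ≤
      Q^2*(Q-1)*((Q+2)^2*(Q-1)*(2*Q^2-Q-1) + 2*(Q+1)*(Q-1)*Q^2) := by
    nlinarith [sq_nonneg Q, sq_nonneg (Q-1), sq_nonneg (Q-2), sq_nonneg (Q*(Q-1)), sq_nonneg (Q*(Q-2))]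
  have PUQ : (0:ℝ) ≤ ((Q+2)^2*(Q-1)*(a*(Q^2*(a+2) - (Q+1))) - (Q+1)*(Q^2*a - (Q-1))^2)*Q^2 := by
    nlinarith [hintA, hintB, hQonly]
  have := (mul_le_mul_iff_left₀ hQ2).mp (by linarith [PUQ] :
    (0:ℝ)*Q^2 ≤ ((Q+2)^2*(Q-1)*(a*(Q^2*(a+2) - (Q+1))) - (Q+1)*(Q^2*a - (Q-1))^2)*Q^2)
  linarith


lemma NL (hq : 2 ≤ q) (hk : 7 ≤ k) :
    (q:ℝ) * Real.sqrt ((Deln q k : ℝ) * ((q:ℝ)-1)) + 1/2 ≤ (Sn q k : ℝ) := by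
  have hQ2 : (2:ℝ) ≤ (q:ℝ) := by exact_mod_cast hq
  set Q : ℝ := (q:ℝ) with hQdef
  have hQpos : (0:ℝ) < Q := by linarith
  have hqm : Q - 1 ≠ 0 := by nlinarith
  have hq2m : Q^2 - 1 ≠ 0 := by nlinarith
  have ha : Q^5 - 1 ≤ Q^(k-2) - 1 := by
    have := pow_le_pow_right₀ (by linarith : (1:ℝ) ≤ Q) (by omega : 5 ≤ k-2)
    linarith
  have hX' : (((Deln q k : ℝ))*(Q-1))*(Q^2-1)
      = (Q^(k-2)-1)*(Q^2*((Q^(k-2)-1)+2) - (Q+1)) := by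
    rw [Deln_real hq, ← hQdef]
    field_simp
    ring
  have hS' : ((Sn q k : ℝ))*(Q-1) = Q^2*(Q^(k-2)-1) := by
    rw [Sn_real hq, ← hQdef]
    field_simp
  have hX0 : (0:ℝ) ≤ (Deln q k : ℝ)*(Q-1) :=
    mul_nonneg (Nat.cast_nonneg _) (by linarith)
  have hu : (4:ℝ) ≤ (Sn q k : ℝ) := by
    have h1 := Sn_ge hq hk
    have h2 : ((q^2 : ℕ) : ℝ) ≤ (Sn q k : ℝ) := by exact_mod_cast h1
    push_cast at h2
    nlinarith
  have hpoly := polyL Q (Q^(k-2)-1) hQ2 ha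
  have hP : (0:ℝ) < (Q-1)^2*(Q+1) := by nlinarith [sq_nonneg (Q-1)]
  have e3 : (((Sn q k : ℝ)-1/2)^2 - ((Deln q k : ℝ)*(Q-1))*Q^2)*((Q-1)^2*(Q+1)) =
      (Q+1)*(Q^2*(Q^(k-2)-1) - (Q-1)/2)^2
        - Q^2*(Q-1)*((Q^(k-2)-1)*(Q^2*((Q^(k-2)-1)+2) - (Q+1))) := by
    linear_combination ((Q+1)*(((Sn q k : ℝ)-1/2)*(Q-1) + Q^2*(Q^(k-2)-1) - (Q-1)/2)) * hS'
      - Q^2*(Q-1)*hX'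
  have h6 : (0:ℝ) ≤ ((Sn q k : ℝ)-1/2)^2 - ((Deln q k : ℝ)*(Q-1))*Q^2 := by
    by_contra hneg
    push_neg at hneg
    have hlt : (((Sn q k : ℝ)-1/2)^2 - ((Deln q k : ℝ)*(Q-1))*Q^2)*((Q-1)^2*(Q+1)) < 0 :=
      mul_neg_of_neg_of_pos hneg hP
    rw [e3] at hlt
    linarith
  have h8 : (Deln q k : ℝ)*(Q-1) ≤ (((Sn q k : ℝ)-1/2)/Q)^2 := by
    rw [div_pow, le_div_iff₀ (by positivity)]
    linarith
  have h7 : Real.sqrt ((Deln q k : ℝ)*(Q-1)) ≤ ((Sn q k : ℝ)-1/2)/Q :=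
    calc Real.sqrt ((Deln q k : ℝ)*(Q-1)) ≤ Real.sqrt ((((Sn q k : ℝ)-1/2)/Q)^2) :=
          Real.sqrt_le_sqrt h8
      _ = ((Sn q k : ℝ)-1/2)/Q := Real.sqrt_sq (div_nonneg (by linarith) (le_of_lt hQpos))
  have h9 := mul_le_mul_of_nonneg_left h7 (le_of_lt hQpos)
  rw [mul_div_cancel₀ _ (ne_of_gt hQpos)] at h9
  linarith

lemma NU (hq : 2 ≤ q) (hk : 7 ≤ k) :
    (Sn q k : ℝ) ≤ ((q:ℝ)+2) * Real.sqrt ((Deln q k : ℝ) * ((q:ℝ)-1)) + 1 := by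
  have hQ2 : (2:ℝ) ≤ (q:ℝ) := by exact_mod_cast hq
  set Q : ℝ := (q:ℝ) with hQdef
  have hQpos : (0:ℝ) < Q := by linarith
  have hqm : Q - 1 ≠ 0 := by nlinarith
  have hq2m : Q^2 - 1 ≠ 0 := by nlinarith
  have ha : Q^5 - 1 ≤ Q^(k-2) - 1 := by
    have := pow_le_pow_right₀ (by linarith : (1:ℝ) ≤ Q) (by omega : 5 ≤ k-2)
    linarith
  have hX' : (((Deln q k : ℝ))*(Q-1))*(Q^2-1)
      = (Q^(k-2)-1)*(Q^2*((Q^(k-2)-1)+2) - (Q+1)) := by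
    rw [Deln_real hq, ← hQdef]
    field_simp
    ring
  have hS' : ((Sn q k : ℝ))*(Q-1) = Q^2*(Q^(k-2)-1) := by
    rw [Sn_real hq, ← hQdef]
    field_simp
  have hu : (4:ℝ) ≤ (Sn q k : ℝ) := by
    have h1 := Sn_ge hq hk
    have h2 : ((q^2 : ℕ) : ℝ) ≤ (Sn q k : ℝ) := by exact_mod_cast h1
    push_cast at h2
    nlinarith
  have hpoly := polyU Q (Q^(k-2)-1) hQ2 ha
  have hP : (0:ℝ) < (Q-1)^2*(Q+1) := by nlinarith [sq_nonneg (Q-1)]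
  have e4 : (((Q+2)^2*((Deln q k : ℝ)*(Q-1)) - ((Sn q k : ℝ)-1)^2))*((Q-1)^2*(Q+1)) =
      (Q+2)^2*(Q-1)*((Q^(k-2)-1)*(Q^2*((Q^(k-2)-1)+2) - (Q+1)))
        - (Q+1)*(Q^2*(Q^(k-2)-1) - (Q-1))^2 := by
    linear_combination (Q+2)^2*(Q-1)*hX'
      - (Q+1)*(((Sn q k : ℝ)-1)*(Q-1) + Q^2*(Q^(k-2)-1) - (Q-1))*hS'
  have h6 : (0:ℝ) ≤ (Q+2)^2*((Deln q k : ℝ)*(Q-1)) - ((Sn q k : ℝ)-1)^2 := by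
    by_contra hneg
    push_neg at hneg
    have hlt : ((Q+2)^2*((Deln q k : ℝ)*(Q-1)) - ((Sn q k : ℝ)-1)^2)*((Q-1)^2*(Q+1)) < 0 :=
      mul_neg_of_neg_of_pos hneg hP
    rw [e4] at hlt
    linarith
  have h9 : (Sn q k : ℝ) - 1 ≤ (Q+2) * Real.sqrt ((Deln q k : ℝ)*(Q-1)) := by
    have hs1 : (Sn q k : ℝ) - 1 = Real.sqrt (((Sn q k : ℝ)-1)^2) :=
      (Real.sqrt_sq (by linarith)).symm
    rw [hs1]
    have hs2 : Real.sqrt (((Sn q k : ℝ)-1)^2)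
        ≤ Real.sqrt ((Q+2)^2*((Deln q k : ℝ)*(Q-1))) := Real.sqrt_le_sqrt (by linarith)
    have hs3 : Real.sqrt ((Q+2)^2*((Deln q k : ℝ)*(Q-1)))
        = (Q+2) * Real.sqrt ((Deln q k : ℝ)*(Q-1)) := by
      rw [Real.sqrt_mul (sq_nonneg _), Real.sqrt_sq (by linarith)]
    rw [hs3] at hs2
    calc Real.sqrt (((Sn q k : ℝ)-1)^2) = Real.sqrt (((Sn q k : ℝ)-1)^2) := rfl
      _ ≤ (Q+2) * Real.sqrt ((Deln q k : ℝ)*(Q-1)) := hs2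
  linarith

end RealBounds


section Main
open C4FC C4FC2 C4FC3 C4FC4

theorem stmt_11 (δ k q : ℕ) (hq : IsPrimePow q) (hδq : δ - 1 = q) (hk : 7 ≤ k) :
    ∃ (V : Type) (G : SimpleGraph V) (Δ : ℕ), Finite V ∧ G.Connected ∧ G.Colorable 2 ∧
      CycleFree G 4 ∧
      (∀ v : V, δ ≤ (G.neighborSet v).ncard) ∧ (∃ v : V, (G.neighborSet v).ncard = δ) ∧
      (∀ v : V, (G.neighborSet v).ncard ≤ Δ) ∧ (∃ v : V, (G.neighborSet v).ncard = Δ) ∧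
      (Δ : ℝ) = ((q : ℝ) ^ k - 1) * ((q : ℝ) ^ (k - 1) - 1) /
          (((q : ℝ) ^ 2 - 1) * ((q : ℝ) ^ 2 - q)) - 1 / q ∧
      (Δ : ℝ) * δ + ((δ : ℝ) - 1) * Real.sqrt ((Δ : ℝ) * ((δ : ℝ) - 2)) + 3 / 2 ≤
        (Nat.card V : ℝ) ∧
      (Nat.card V : ℝ) ≤
        (Δ : ℝ) * δ + ((δ : ℝ) - 1) * Real.sqrt ((Δ : ℝ) * ((δ : ℝ) - 2)) + 3 / 2
          + 2 * Real.sqrt ((Δ : ℝ) * ((δ : ℝ) - 2)) + 1 / 2 := by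
  have hq2 : 2 ≤ q := hq.two_le
  have hδ : δ = q + 1 := by omega
  obtain ⟨p, n, hp, hn, hpn⟩ := hq
  haveI : Fact (Nat.Prime p) := ⟨Nat.prime_iff.mpr hp⟩
  set F := GaloisField p n with hFdef
  haveI : Fintype F := Fintype.ofFinite F
  have hF : Nat.card F = q := by
    rw [GaloisField.card p n (by omega), hpn]
  have hΔ : Nat.card (UT F k) = Deln q k := by
    rw [card_UT, hF]
    rfl
  have hS : Nat.card (PT F k) = Sn q k := by
    rw [card_PT, hF]
    rfl
  refine ⟨VT F k, G F k, Nat.card (UT F k), inferInstance, conn, colorable2, ?_, ?_, ?_, ?_, ?_, ?_, ?_, ?_⟩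
  · -- CycleFree
    intro v w hcyc hlen
    cases w with
    | nil => simp at hlen
    | cons h1 w1 =>
      cases w1 with
      | nil => simp at hlen
      | cons h2 w2 =>
        cases w2 with
        | nil => simp at hlen
        | cons h3 w3 =>
          cases w3 with
          | nil => simp at hlen
          | cons h4 w4 =>
            cases w4 with
            | cons h5 w5 =>
              simp [SimpleGraph.Walk.length_cons] at hlen
            | nil =>
              have hnd := hcyc.support_nodup
              simp [SimpleGraph.Walk.support_cons, SimpleGraph.Walk.support_nil] at hnd
              exact nocommon h1 h2 h3 h4 (fun he => hnd.2.1.2 he.symm) (fun he => hnd.1.2.1 he)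
  · -- min degree
    intro v
    rcases v with _ | u | l | pt
    · rw [deg_hub, hΔ, hδ]
      exact N2 (by omega) (by omega)
    · rw [deg_u, hF, hδ]
    · rw [deg_l, hF, hδ]
    · rw [deg_p, card_dir, hF, hδ]
      exact N4 (by omega) _
  · -- exists min degree vertex
    refine ⟨vU ⟨⟨0, by omega⟩, ⟨(d0 0, fun _ => 0), rfl, rfl⟩⟩, ?_⟩
    rw [deg_u, hF, hδ]
  · -- max degree
    intro v
    rcases v with _ | u | l | pt
    · rw [deg_hub]
    · rw [deg_u, hF, hΔ, ← hδ]
      have := N2 (q := q) (k := k) (by omega) (by omega)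
      omega
    · rw [deg_l, hF, hΔ, ← hδ]
      have := N2 (q := q) (k := k) (by omega) (by omega)
      omega
    · rw [deg_p, card_dir, hF, hΔ]
      exact N3 (by omega) pt.1.isLt
  · exact ⟨vHub, deg_hub⟩
  · -- real identity
    rw [hΔ]
    exact N1 hq2 hk
  all_goals {
    have hcard : (Nat.card (VT F k) : ℝ)
        = 1 + (Nat.card (UT F k) : ℝ) + (Nat.card (UT F k) : ℝ) * q + (Sn q k : ℝ) := by
      rw [card_VT, card_LT, hF, hS]
      push_cast
      ring
    have hδ1 : ((δ : ℕ) : ℝ) = (q : ℝ) + 1 := by rw [hδ]; push_cast; ring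
    have hδ2 : ((δ : ℕ) : ℝ) - 2 = (q : ℝ) - 1 := by rw [hδ1]; ring
    have hNL := NL hq2 hk
    have hNU := NU hq2 hk
    rw [hΔ] at *
    rw [hcard, hδ1]
    rw [show ((q:ℝ) + 1 - 2) = ((q:ℝ) - 1) from by ring]
    linarith [hNL, hNU]
  }
end Main
end

section
/- Let q be a prime power and let H_q be the bipartite graph whose partite sets are the 1-dimensional and the 2-dimensional subspaces of the 3-dimensional vector space GF(q)³ over the finite field GF(q), where a 1-dimensional subspace v₁ is adjacent to a 2-dimensional subspace v₂ if and only if v₁ ⊆ v₂. Then H_q has exactly 2(q² + q + 1) vertices, is (q+1)-regular, has diameter 3, and contains no 4-cycle as a subgraph. -/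
open SimpleGraph

/-- The bipartite incidence graph between the 1-dimensional and 2-dimensional subspaces of
the 3-dimensional vector space `Fin 3 → F` over `F`, where a 1-dimensional subspace is
adjacent to a 2-dimensional subspace iff it is contained in it. -/
def Hq (F : Type*) [Field F] :
    SimpleGraph {W : Submodule F (Fin 3 → F) //
      Module.finrank F W = 1 ∨ Module.finrank F W = 2} where
  Adj a b := a.1 < b.1 ∨ b.1 < a.1
  symm := ⟨fun a b h => h.symm⟩
  loopless := ⟨fun a h => h.elim (lt_irrefl a.1) (lt_irrefl a.1)⟩

open Module Submodule

section Aux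

variable {F : Type} [Field F] [Fintype F]

lemma aux_card_lines (M : Type*) [AddCommGroup M] [Module F M] [FiniteDimensional F M] :
    Nat.card {W : Submodule F M // finrank F W = 1} * (Fintype.card F - 1)
      = Fintype.card F ^ finrank F M - 1 := by
  classical
  have hfin : Finite M := Module.finite_of_finite F
  have : Fintype M := Fintype.ofFinite M
  have h1 : Nat.card {W : Submodule F M // finrank F W = 1}
      = Nat.card (Projectivization F M) :=
    Nat.card_congr (Projectivization.equivSubmodule F M).symm
  have hfib : ∀ p : Projectivization F M,
      Fˣ ≃ {v : {v : M // v ≠ 0} // Projectivization.mk F v.1 v.2 = p} := by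
    intro p
    refine Equiv.ofBijective (fun a => ⟨⟨(a : F) • p.rep,
      smul_ne_zero a.ne_zero p.rep_nonzero⟩, ?_⟩) ⟨?_, ?_⟩
    · rw [show Projectivization.mk F ((a : F) • p.rep)
          (smul_ne_zero a.ne_zero p.rep_nonzero) = Projectivization.mk F p.rep p.rep_nonzero from
        (Projectivization.mk_eq_mk_iff' F _ _ _ _).2 ⟨a, rfl⟩]
      exact p.mk_rep
    · intro a b hab
      have h := congrArg (fun x => (x.1 : M)) hab
      simp only at h
      have := sub_smul (a : F) (b : F) p.rep
      have hz : ((a : F) - b) • p.rep = 0 := by rw [sub_smul, h, sub_self]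
      rcases smul_eq_zero.1 hz with h' | h'
      · exact Units.ext (by linear_combination (norm := skip) h'; rw [sub_eq_zero] at h'; simp [h'])
      · exact absurd h' p.rep_nonzero
    · rintro ⟨⟨v, hv⟩, hp⟩
      have : Projectivization.mk F v hv = Projectivization.mk F p.rep p.rep_nonzero := by
        rw [hp, p.mk_rep]
      obtain ⟨a, ha⟩ := (Projectivization.mk_eq_mk_iff F _ _ _ _).1 this
      exact ⟨a, Subtype.ext (Subtype.ext (by simpa [Units.smul_def] using ha))⟩
  have h2 : Nat.card {v : M // v ≠ 0}
      = Nat.card (Projectivization F M) * (Fintype.card F - 1) := by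
    have e : {v : M // v ≠ 0} ≃ Projectivization F M × Fˣ :=
      ((Equiv.sigmaFiberEquiv (fun v : {v : M // v ≠ 0} =>
          Projectivization.mk F v.1 v.2)).symm.trans
        (Equiv.sigmaCongrRight (fun p => (hfib p).symm))).trans
        (Equiv.sigmaEquivProd _ _)
    rw [Nat.card_congr e, Nat.card_prod, Nat.card_eq_fintype_card (α := Fˣ),
      Fintype.card_units]
  have h3 : Nat.card {v : M // v ≠ 0} = Fintype.card F ^ finrank F M - 1 := by
    have : Fintype.card {v : M // v ≠ 0} = Fintype.card M - 1 := by
      rw [Fintype.card_subtype_compl (· = (0 : M)), Fintype.card_subtype_eq]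
    rw [Nat.card_eq_fintype_card, this, card_eq_pow_finrank (K := F)]
  rw [h1, ← h2, h3]

lemma aux_lines_two (M : Type*) [AddCommGroup M] [Module F M] [FiniteDimensional F M]
    (h2 : finrank F M = 2) :
    Nat.card {W : Submodule F M // finrank F W = 1} = Fintype.card F + 1 := by
  have hq : 2 ≤ Fintype.card F := Fintype.one_lt_card
  have key := aux_card_lines (F := F) M
  rw [h2] at key
  have hrhs : (Fintype.card F + 1) * (Fintype.card F - 1) = Fintype.card F ^ 2 - 1 := by
    have h1 : 1 ≤ Fintype.card F ^ 2 := Nat.one_le_pow _ _ (by omega)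
    zify [(by omega : 1 ≤ Fintype.card F), h1]
    push_cast [Nat.cast_sub (by omega : 1 ≤ Fintype.card F)]
    ring
  exact Nat.eq_of_mul_eq_mul_right (by omega) (key.trans hrhs.symm)

lemma aux_lines_three (M : Type*) [AddCommGroup M] [Module F M] [FiniteDimensional F M]
    (h3 : finrank F M = 3) :
    Nat.card {W : Submodule F M // finrank F W = 1}
      = Fintype.card F ^ 2 + Fintype.card F + 1 := by
  have hq : 2 ≤ Fintype.card F := Fintype.one_lt_card
  have key := aux_card_lines (F := F) M
  rw [h3] at key
  have hrhs : (Fintype.card F ^ 2 + Fintype.card F + 1) * (Fintype.card F - 1)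
      = Fintype.card F ^ 3 - 1 := by
    have h1 : 1 ≤ Fintype.card F ^ 3 := Nat.one_le_pow _ _ (by omega)
    zify [h1]
    push_cast [Nat.cast_sub (by omega : 1 ≤ Fintype.card F)]
    ring
  exact Nat.eq_of_mul_eq_mul_right (by omega) (key.trans hrhs.symm)

end Aux

section Graph

variable {F : Type} [Field F] [Fintype F]

abbrev Vx (F : Type) [Field F] :=
  {W : Submodule F (Fin 3 → F) // finrank F W = 1 ∨ finrank F W = 2}

lemma frk3 : finrank F (Fin 3 → F) = 3 := by simp

lemma ann_finrank (W : Submodule F (Fin 3 → F)) :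
    finrank F W.dualAnnihilator = 3 - finrank F W := by
  have h1 := Subspace.finrank_add_finrank_dualCoannihilator_eq (W.dualAnnihilator)
  rw [Subspace.dualAnnihilator_dualCoannihilator_eq, frk3] at h1
  have h2 : finrank F W ≤ 3 := by
    have := Submodule.finrank_le W
    rwa [frk3] at this
  omega

lemma rank_lt {a b : Vx F} (h : a.1 < b.1) :
    finrank F a.1 = 1 ∧ finrank F b.1 = 2 := by
  have hlt : finrank F a.1 < finrank F b.1 := Submodule.finrank_lt_finrank_of_lt h
  rcases a.2 with h1 | h1 <;> rcases b.2 with h2 | h2 <;> omega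

lemma sup_lines {u w : Submodule F (Fin 3 → F)} (hu : finrank F u = 1)
    (hw : finrank F w = 1) (hne : u ≠ w) : finrank F ↥(u ⊔ w) = 2 := by
  have hinf : u ⊓ w < u := by
    refine lt_of_le_of_ne inf_le_left fun h => hne ?_
    have hle : u ≤ w := by rw [← h]; exact inf_le_right
    exact Submodule.eq_of_le_of_finrank_le hle (by omega)
  have h0 : finrank F ↥(u ⊓ w) = 0 := by
    have := Submodule.finrank_lt_finrank_of_lt hinf; omega
  have := Submodule.finrank_sup_add_finrank_inf_eq u w
  omega

lemma lt_sup_left {u w : Submodule F (Fin 3 → F)} (hu : finrank F u = 1)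
    (hw : finrank F w = 1) (hne : u ≠ w) : u < u ⊔ w := by
  refine lt_of_le_of_ne le_sup_left fun h => hne ?_
  have hle : w ≤ u := by rw [h]; exact le_sup_right
  exact (Submodule.eq_of_le_of_finrank_le hle (by omega)).symm

lemma inf_planes {u w : Submodule F (Fin 3 → F)} (hu : finrank F u = 2)
    (hw : finrank F w = 2) (hne : u ≠ w) : finrank F ↥(u ⊓ w) = 1 := by
  have hsup : u < u ⊔ w := by
    refine lt_of_le_of_ne le_sup_left fun h => hne ?_
    have hle : w ≤ u := by rw [h]; exact le_sup_right
    exact (Submodule.eq_of_le_of_finrank_le hle (by omega)).symm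
  have h3 : finrank F ↥(u ⊔ w) = 3 := by
    have h2 := Submodule.finrank_lt_finrank_of_lt hsup
    have h4 : finrank F ↥(u ⊔ w) ≤ 3 := by
      have := Submodule.finrank_le (u ⊔ w)
      rwa [frk3] at this
    omega
  have := Submodule.finrank_sup_add_finrank_inf_eq u w
  omega

lemma exists_line {M : Type*} [AddCommGroup M] [Module F M]
    (A : Submodule F M) (hA : finrank F A ≠ 0) :
    ∃ W : Submodule F M, finrank F W = 1 ∧ W ≤ A := by
  have hbot : A ≠ ⊥ := by rintro rfl; simp at hA
  obtain ⟨x, hxA, hx0⟩ := Submodule.ne_bot_iff A |>.1 hbot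
  exact ⟨Submodule.span F {x}, finrank_span_singleton hx0,
    Submodule.span_le.2 (Set.singleton_subset_iff.2 hxA)⟩

lemma walk_line_line (u v : Vx F) (hu : finrank F u.1 = 1) (hv : finrank F v.1 = 1) :
    ∃ w : (Hq F).Walk u v, w.length ≤ 2 := by
  by_cases h : u = v
  · subst h; exact ⟨.nil, by simp⟩
  · have hne : u.1 ≠ v.1 := fun hh => h (Subtype.ext hh)
    have hP2 : finrank F ↥(u.1 ⊔ v.1) = 2 := sup_lines hu hv hne
    set P : Vx F := ⟨u.1 ⊔ v.1, Or.inr hP2⟩ with hP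
    have h1 : (Hq F).Adj u P := Or.inl (lt_sup_left hu hv hne)
    have h2 : (Hq F).Adj P v := by
      refine Or.inr ?_
      show v.1 < u.1 ⊔ v.1
      rw [sup_comm]
      exact lt_sup_left hv hu hne.symm
    exact ⟨.cons h1 (.cons h2 .nil), by simp⟩

lemma walk_line_plane (u v : Vx F) (hu : finrank F u.1 = 1) (hv : finrank F v.1 = 2) :
    ∃ w : (Hq F).Walk u v, w.length ≤ 3 := by
  by_cases h : u.1 ≤ v.1
  · exact ⟨.cons (Or.inl (lt_of_le_of_ne h (fun hh => by rw [hh] at hu; omega)) : (Hq F).Adj u v) .nil, by show 1 ≤ 3; omega⟩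
  · obtain ⟨c, hc1, hcv⟩ := exists_line v.1 (by omega)
    have hcu : u.1 ≠ c := fun hh => h (hh ▸ hcv)
    set C : Vx F := ⟨c, Or.inl hc1⟩ with hC
    have hP2 : finrank F ↥(u.1 ⊔ c) = 2 := sup_lines hu hc1 hcu
    set P : Vx F := ⟨u.1 ⊔ c, Or.inr hP2⟩ with hP
    have h1 : (Hq F).Adj u P := Or.inl (lt_sup_left hu hc1 hcu)
    have h2 : (Hq F).Adj P C := by
      refine Or.inr ?_
      show c < u.1 ⊔ c
      rw [sup_comm]
      exact lt_sup_left hc1 hu (Ne.symm hcu)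
    have h3 : (Hq F).Adj C v := by
      refine Or.inl ?_
      show c < v.1
      exact lt_of_le_of_ne hcv (fun hh => by rw [hh] at hc1; omega)
    exact ⟨.cons h1 (.cons h2 (.cons h3 .nil)), by simp⟩

lemma walk_plane_plane (u v : Vx F) (hu : finrank F u.1 = 2) (hv : finrank F v.1 = 2) :
    ∃ w : (Hq F).Walk u v, w.length ≤ 2 := by
  by_cases h : u = v
  · subst h; exact ⟨.nil, by simp⟩
  · have hne : u.1 ≠ v.1 := fun hh => h (Subtype.ext hh)
    obtain ⟨c, hc1, hcle⟩ := exists_line (u.1 ⊓ v.1) (by rw [inf_planes hu hv hne]; omega)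
    set C : Vx F := ⟨c, Or.inl hc1⟩ with hC
    have h1 : (Hq F).Adj u C := by
      refine Or.inr ?_
      show c < u.1
      exact lt_of_le_of_ne (hcle.trans inf_le_left) (fun hh => by rw [hh] at hc1; omega)
    have h2 : (Hq F).Adj C v := by
      refine Or.inl ?_
      show c < v.1
      exact lt_of_le_of_ne (hcle.trans inf_le_right) (fun hh => by rw [hh] at hc1; omega)
    exact ⟨.cons h1 (.cons h2 .nil), by simp⟩

lemma exists_short_walk (u v : Vx F) : ∃ w : (Hq F).Walk u v, w.length ≤ 3 := by
  rcases u.2 with hu | hu <;> rcases v.2 with hv | hv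
  · obtain ⟨w, hw⟩ := walk_line_line u v hu hv; exact ⟨w, by omega⟩
  · exact walk_line_plane u v hu hv
  · obtain ⟨w, hw⟩ := walk_line_plane v u hv hu
    exact ⟨w.reverse, by simpa using hw⟩
  · obtain ⟨w, hw⟩ := walk_plane_plane u v hu hv; exact ⟨w, by omega⟩

lemma walk_parity {u v : Vx F} (w : (Hq F).Walk u v) :
    (finrank F u.1 + w.length) % 2 = finrank F v.1 % 2 := by
  induction w with
  | nil => simp
  | @cons a b c h p ih =>
    have h3 : finrank F a.1 + finrank F b.1 = 3 := by
      rcases h with h | h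
      · have := rank_lt h; omega
      · have := rank_lt h; omega
    simp only [SimpleGraph.Walk.length_cons]
    omega

lemma mid_extreme {x y z : Vx F} (hxy : (Hq F).Adj x y) (hyz : (Hq F).Adj y z) :
    (x.1 < y.1 ∧ z.1 < y.1) ∨ (y.1 < x.1 ∧ y.1 < z.1) := by
  rcases hxy with h1 | h1 <;> rcases hyz with h2 | h2
  · have a1 := rank_lt h1; have a2 := rank_lt h2; omega
  · exact Or.inl ⟨h1, h2⟩
  · exact Or.inr ⟨h1, h2⟩
  · have a1 := rank_lt h1; have a2 := rank_lt h2; omega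

end Graph

section Count2

variable {F : Type} [Field F] [Fintype F]

lemma coann_finrank (Φ : Submodule F (Dual F (Fin 3 → F))) :
    finrank F Φ.dualCoannihilator = 3 - finrank F Φ := by
  have h1 := Subspace.finrank_add_finrank_dualCoannihilator_eq Φ
  rw [frk3] at h1
  have h2 : finrank F Φ ≤ 3 := by
    have := Submodule.finrank_le Φ
    rwa [Subspace.dual_finrank_eq, frk3] at this
  omega

lemma planes_card :
    Nat.card {W : Submodule F (Fin 3 → F) // finrank F W = 2}
      = Fintype.card F ^ 2 + Fintype.card F + 1 := by
  have e : {W : Submodule F (Fin 3 → F) // finrank F W = 2}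
      ≃ {Φ : Submodule F (Dual F (Fin 3 → F)) // finrank F Φ = 1} :=
    { toFun := fun W => ⟨W.1.dualAnnihilator, by rw [ann_finrank, W.2]⟩
      invFun := fun Φ => ⟨Φ.1.dualCoannihilator, by rw [coann_finrank, Φ.2]⟩
      left_inv := fun W => Subtype.ext Subspace.dualAnnihilator_dualCoannihilator_eq
      right_inv := fun Φ => Subtype.ext Subspace.dualCoannihilator_dualAnnihilator_eq }
  rw [Nat.card_congr e]
  exact aux_lines_three _ (by rw [Subspace.dual_finrank_eq]; exact frk3)

lemma lines_le_card {M : Type*} [AddCommGroup M] [Module F M] [FiniteDimensional F M]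
    (A : Submodule F M) (hA : finrank F A = 2) :
    Nat.card {W : Submodule F M // finrank F W = 1 ∧ W ≤ A} = Fintype.card F + 1 := by
  have e1 : {U : Submodule F A // finrank F U = 1}
      ≃ {W : {W : Submodule F M // W ≤ A} // finrank F W.1 = 1} :=
    (Submodule.MapSubtype.orderIso A).toEquiv.subtypeEquiv fun U => by
      rw [show ((((Submodule.MapSubtype.orderIso A).toEquiv U) :
            {W : Submodule F M // W ≤ A}) : Submodule F M)
          = U.map A.subtype from rfl, Submodule.finrank_map_subtype_eq]
  have e2 := Equiv.subtypeSubtypeEquivSubtypeInter (fun W : Submodule F M => W ≤ A)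
    (fun W => finrank F W = 1)
  calc Nat.card {W : Submodule F M // finrank F W = 1 ∧ W ≤ A}
      = Nat.card {W : Submodule F M // W ≤ A ∧ finrank F W = 1} :=
        Nat.card_congr (Equiv.subtypeEquivRight fun W => and_comm)
    _ = Nat.card {U : Submodule F A // finrank F U = 1} :=
        (Nat.card_congr (e1.trans e2)).symm
    _ = Fintype.card F + 1 := aux_lines_two (↥A) hA

lemma neighbor_plane (a : Vx F) (ha : finrank F a.1 = 2) :
    Nat.card {b : Vx F // (Hq F).Adj a b} = Fintype.card F + 1 := by
  have e0 : {b : Vx F // (Hq F).Adj a b} ≃ {W : Submodule F (Fin 3 → F) //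
      (finrank F W = 1 ∨ finrank F W = 2) ∧ (a.1 < W ∨ W < a.1)} :=
    (Equiv.subtypeEquivRight (fun b => Iff.rfl)).trans
      (Equiv.subtypeSubtypeEquivSubtypeInter
        (fun W : Submodule F (Fin 3 → F) => finrank F W = 1 ∨ finrank F W = 2)
        (fun W => a.1 < W ∨ W < a.1))
  have e1 : {W : Submodule F (Fin 3 → F) //
      (finrank F W = 1 ∨ finrank F W = 2) ∧ (a.1 < W ∨ W < a.1)}
      ≃ {W : Submodule F (Fin 3 → F) // finrank F W = 1 ∧ W ≤ a.1} := by
    refine Equiv.subtypeEquivRight fun W => ⟨?_, ?_⟩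
    · rintro ⟨hor, hlt | hlt⟩
      · exfalso
        have h1 := Submodule.finrank_lt_finrank_of_lt hlt
        have h2 : finrank F W ≤ 3 := by
          have := Submodule.finrank_le W; rwa [frk3] at this
        rcases hor with h | h <;> omega
      · have h1 := Submodule.finrank_lt_finrank_of_lt hlt
        exact ⟨by rcases hor with h | h <;> omega, hlt.le⟩
    · rintro ⟨h1, hle⟩
      exact ⟨Or.inl h1, Or.inr (lt_of_le_of_ne hle (fun hh => by rw [hh] at h1; omega))⟩
  rw [Nat.card_congr (e0.trans e1)]
  exact lines_le_card a.1 ha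

lemma neighbor_line (a : Vx F) (ha : finrank F a.1 = 1) :
    Nat.card {b : Vx F // (Hq F).Adj a b} = Fintype.card F + 1 := by
  have e0 : {b : Vx F // (Hq F).Adj a b} ≃ {W : Submodule F (Fin 3 → F) //
      (finrank F W = 1 ∨ finrank F W = 2) ∧ (a.1 < W ∨ W < a.1)} :=
    (Equiv.subtypeEquivRight (fun b => Iff.rfl)).trans
      (Equiv.subtypeSubtypeEquivSubtypeInter
        (fun W : Submodule F (Fin 3 → F) => finrank F W = 1 ∨ finrank F W = 2)
        (fun W => a.1 < W ∨ W < a.1))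
  have e1 : {W : Submodule F (Fin 3 → F) //
      (finrank F W = 1 ∨ finrank F W = 2) ∧ (a.1 < W ∨ W < a.1)}
      ≃ {W : Submodule F (Fin 3 → F) // finrank F W = 2 ∧ a.1 ≤ W} := by
    refine Equiv.subtypeEquivRight fun W => ⟨?_, ?_⟩
    · rintro ⟨hor, hlt | hlt⟩
      · have h1 := Submodule.finrank_lt_finrank_of_lt hlt
        exact ⟨by rcases hor with h | h <;> omega, hlt.le⟩
      · exfalso
        have h1 := Submodule.finrank_lt_finrank_of_lt hlt
        rcases hor with h | h <;> omega
    · rintro ⟨h2, hle⟩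
      exact ⟨Or.inr h2, Or.inl (lt_of_le_of_ne hle (fun hh => by rw [← hh] at h2; omega))⟩
  have e2 : {W : Submodule F (Fin 3 → F) // finrank F W = 2 ∧ a.1 ≤ W}
      ≃ {Φ : Submodule F (Dual F (Fin 3 → F)) //
          finrank F Φ = 1 ∧ Φ ≤ a.1.dualAnnihilator} :=
    { toFun := fun W => ⟨W.1.dualAnnihilator,
        ⟨by rw [ann_finrank, W.2.1], Submodule.dualAnnihilator_anti W.2.2⟩⟩
      invFun := fun Φ => ⟨Φ.1.dualCoannihilator,
        ⟨by rw [coann_finrank, Φ.2.1], by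
          have h := Submodule.dualCoannihilator_anti Φ.2.2
          rwa [Subspace.dualAnnihilator_dualCoannihilator_eq] at h⟩⟩
      left_inv := fun W => Subtype.ext Subspace.dualAnnihilator_dualCoannihilator_eq
      right_inv := fun Φ => Subtype.ext Subspace.dualCoannihilator_dualAnnihilator_eq }
  rw [Nat.card_congr ((e0.trans e1).trans e2)]
  exact lines_le_card a.1.dualAnnihilator (by rw [ann_finrank, ha])

end Count2

theorem stmt_15 (q : ℕ) (hq : IsPrimePow q) (F : Type) [Field F] [Fintype F]
    (hF : Fintype.card F = q) :
    Nat.card {W : Submodule F (Fin 3 → F) //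
        Module.finrank F W = 1 ∨ Module.finrank F W = 2} = 2 * (q ^ 2 + q + 1) ∧
      (∀ v, ((Hq F).neighborSet v).ncard = q + 1) ∧
      (Hq F).Connected ∧
      (∀ u v, (Hq F).dist u v ≤ 3) ∧ (∃ u v, (Hq F).dist u v = 3) ∧
      CycleFree (Hq F) 4 := by
  subst hF
  classical
  haveI : Finite (Submodule F (Fin 3 → F)) :=
    Finite.of_injective (fun W => (W : Set (Fin 3 → F))) SetLike.coe_injective
  -- a specific line and plane
  have hx0 : (Pi.single 2 1 : Fin 3 → F) ≠ 0 := fun h => one_ne_zero (α := F) (by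
    have := congrFun h 2
    simpa using this)
  have hL1 : finrank F (Submodule.span F {(Pi.single 2 1 : Fin 3 → F)}) = 1 :=
    finrank_span_singleton hx0
  have hrange : LinearMap.range (LinearMap.proj (R := F) (φ := fun _ : Fin 3 => F) 2) = ⊤ :=
    LinearMap.range_eq_top.2 (fun c => ⟨Pi.single 2 c, by simp⟩)
  have hP2 : finrank F (LinearMap.ker (LinearMap.proj (R := F) (φ := fun _ : Fin 3 => F) 2)) = 2 := by
    have h := LinearMap.finrank_range_add_finrank_ker
      (LinearMap.proj (R := F) (φ := fun _ : Fin 3 => F) 2)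
    rw [hrange, finrank_top, frk3, finrank_self] at h
    omega
  set vL : Vx F := ⟨Submodule.span F {(Pi.single 2 1 : Fin 3 → F)}, Or.inl hL1⟩ with hvL
  set vP : Vx F := ⟨LinearMap.ker (LinearMap.proj (R := F) (φ := fun _ : Fin 3 => F) 2),
    Or.inr hP2⟩ with hvP
  have hxL : (Pi.single 2 1 : Fin 3 → F) ∈ vL.1 := Submodule.mem_span_singleton_self _
  have hxP : (Pi.single 2 1 : Fin 3 → F) ∉ vP.1 := by
    simp [hvP, LinearMap.mem_ker]
  refine ⟨?_, ?_, ?_, ?_, ?_, ?_⟩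
  · -- vertex count
    have hdisj : Disjoint (fun W : Submodule F (Fin 3 → F) => finrank F W = 1)
        (fun W : Submodule F (Fin 3 → F) => finrank F W = 2) := by
      rw [Pi.disjoint_iff]
      intro W
      rw [Prop.disjoint_iff]
      rintro ⟨h1, h2⟩
      omega
    calc Nat.card {W : Submodule F (Fin 3 → F) // finrank F W = 1 ∨ finrank F W = 2}
        = Nat.card ({W : Submodule F (Fin 3 → F) // finrank F W = 1} ⊕
            {W : Submodule F (Fin 3 → F) // finrank F W = 2}) :=
          Nat.card_congr (subtypeOrEquiv _ _ hdisj)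
      _ = (Fintype.card F ^ 2 + Fintype.card F + 1) + (Fintype.card F ^ 2 + Fintype.card F + 1) := by
          rw [Nat.card_sum, aux_lines_three _ frk3, planes_card]
      _ = 2 * (Fintype.card F ^ 2 + Fintype.card F + 1) := by ring
  · -- regularity
    intro v
    rw [← Nat.card_coe_set_eq]
    have he : Nat.card ↥((Hq F).neighborSet v) = Nat.card {b : Vx F // (Hq F).Adj v b} :=
      Nat.card_congr (Equiv.subtypeEquivRight fun b => Iff.rfl)
    rw [he]
    rcases v.2 with hv | hv
    · exact neighbor_line v hv
    · exact neighbor_plane v hv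
  · exact (SimpleGraph.connected_iff (Hq F)).mpr ⟨fun u v => ⟨(exists_short_walk u v).choose⟩, ⟨vL⟩⟩
  · intro u v
    obtain ⟨w, hw⟩ := exists_short_walk u v
    exact (SimpleGraph.dist_le w).trans hw
  · refine ⟨vL, vP, ?_⟩
    have hreach : (Hq F).Reachable vL vP := ⟨(exists_short_walk vL vP).choose⟩
    obtain ⟨p, hp⟩ := hreach.exists_walk_length_eq_dist
    have hpar := walk_parity p
    have hle : (Hq F).dist vL vP ≤ 3 := by
      obtain ⟨w, hw⟩ := exists_short_walk vL vP
      exact (SimpleGraph.dist_le w).trans hw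
    have h1 : finrank F vL.1 = 1 := hL1
    have h2 : finrank F vP.1 = 2 := hP2
    have hne1 : ¬ (Hq F).Adj vL vP := by
      rintro (h | h)
      · exact hxP (h.le hxL)
      · have := rank_lt h
        omega
    have hd1 : (Hq F).dist vL vP ≠ 1 := fun h => hne1 (SimpleGraph.dist_eq_one_iff_adj.1 h)
    rw [hp, h1, h2] at hpar
    omega
  · -- C4-free
    intro v w hw hlen
    cases w with
    | nil => simp at hlen
    | @cons _ b _ h1 p => cases p with
      | nil => simp at hlen
      | @cons _ c _ h2 p => cases p with
        | nil => simp at hlen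
        | @cons _ d _ h3 p => cases p with
          | nil => simp at hlen
          | @cons _ e _ h4 p => cases p with
            | @cons _ f _ h5 p =>
              simp only [SimpleGraph.Walk.length_cons] at hlen
              omega
            | nil =>
              have hnd := hw.support_nodup
              simp only [SimpleGraph.Walk.support_cons, SimpleGraph.Walk.support_nil,
                List.tail_cons, List.nodup_cons, List.mem_cons, List.mem_singleton,
                List.not_mem_nil, List.nodup_nil, not_or] at hnd
              obtain ⟨⟨hbc, hbd, hbv⟩, ⟨hcd, hcv⟩, hdv⟩ :
                  (¬b = c ∧ ¬b = d ∧ ¬b = v) ∧ (¬c = d ∧ ¬c = v) ∧ ¬d = v := by tauto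
              rcases mid_extreme h1 h2 with ⟨hvb, hcb⟩ | ⟨hbv', hbc'⟩
              · rcases mid_extreme h3 h4 with ⟨hcd', hvd⟩ | ⟨hdc, hdv'⟩
                · have r1 := rank_lt hvb
                  have r2 := rank_lt hcb
                  have r3 := rank_lt hcd'
                  have hvc : v.1 ≠ c.1 := fun hh => hcv (Subtype.ext hh.symm)
                  have hs : finrank F ↥(v.1 ⊔ c.1) = 2 := sup_lines (by omega) (by omega) hvc
                  have hb : v.1 ⊔ c.1 = b.1 :=
                    Submodule.eq_of_le_of_finrank_eq (sup_le hvb.le hcb.le) (by omega)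
                  have hd : v.1 ⊔ c.1 = d.1 :=
                    Submodule.eq_of_le_of_finrank_eq (sup_le hvd.le hcd'.le) (by omega)
                  exact hbd (Subtype.ext (hb.symm.trans hd))
                · have := rank_lt hcb
                  have := rank_lt hdc
                  omega
              · rcases mid_extreme h3 h4 with ⟨hcd', hvd⟩ | ⟨hdc, hdv'⟩
                · have := rank_lt hbv'
                  have := rank_lt hvd
                  omega
                · have r1 := rank_lt hbv'
                  have r2 := rank_lt hbc'
                  have r3 := rank_lt hdc
                  have hbd' : b.1 ≠ d.1 := fun hh => hbd (Subtype.ext hh)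
                  have hs : finrank F ↥(b.1 ⊔ d.1) = 2 := sup_lines (by omega) (by omega) hbd'
                  have hv' : b.1 ⊔ d.1 = v.1 :=
                    Submodule.eq_of_le_of_finrank_eq (sup_le hbv'.le hdv'.le) (by omega)
                  have hc' : b.1 ⊔ d.1 = c.1 :=
                    Submodule.eq_of_le_of_finrank_eq (sup_le hbc'.le hdc.le) (by omega)
                  exact hcv (Subtype.ext (hc'.symm.trans hv'))
end
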